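/- For every α ∈ ℤ^{m|n} and every i ∈ ℤ: if ẽ_i(α) ≠ ∅, then the reduced i-signature of ẽ_i(α) is obtained from the reduced i-signature of α by replacing its leftmost − by a +; dually, if f̃_i(α) ≠ ∅, then the reduced i-signature of f̃_i(α) is obtained from the reduced i-signature of α by replacing its rightmost + by a −. -/

import Mathlib

/-- A symbol of an `i`-signature: `+`, `-`, or `0`. -/
inductive Sign : Type
  | plus : Sign
  | minus : Sign
  | zero : Sign
  deriving DecidableEq, Repr

/-- If the list starts with `0* +`, replace that `+` by `0` (else `none`). -/
def eatPlus : List Sign → Option (List Sign)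
  | [] => none
  | Sign.plus :: rest => some (Sign.zero :: rest)
  | Sign.zero :: rest => (eatPlus rest).map (Sign.zero :: ·)
  | Sign.minus :: _ => none

/-- Cancel the leftmost pattern `- 0* +` (replacing both symbols by `0`), if any. -/
def cancelOne : List Sign → Option (List Sign)
  | [] => none
  | Sign.minus :: rest =>
    match eatPlus rest with
    | some rest' => some (Sign.zero :: rest')
    | none => (cancelOne rest).map (Sign.minus :: ·)
  | s :: rest => (cancelOne rest).map (s :: ·)

/-- Iterate cancellation at most `k` times. -/
def reduceIter : ℕ → List Sign → List Sign
  | 0, l => l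
  | k + 1, l =>
    match cancelOne l with
    | none => l
    | some l' => reduceIter k l'

/-- The reduced signature: cancel `- 0* +` patterns until none remains
(`l.length` iterations always suffice). -/
def reduceSig (l : List Sign) : List Sign := reduceIter l.length l

/-- The `i`-signature symbol of `α ∈ ℤ^{m|n}` at position `j` (0-indexed;
positions `j < m` are left of the separator). -/
def signOf (m n : ℕ) (i : ℤ) (α : Fin (m + n) → ℤ) (j : Fin (m + n)) : Sign :=
  if (j : ℕ) < m then
    if α j = i then Sign.plus else if α j = i + 1 then Sign.minus else Sign.zero
  else
    if α j = i + 1 then Sign.plus else if α j = i then Sign.minus else Sign.zero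

/-- The `i`-signature of `α` as a list of length `m + n`. -/
def sigList (m n : ℕ) (i : ℤ) (α : Fin (m + n) → ℤ) : List Sign :=
  List.ofFn (signOf m n i α)

/-- The reduced `i`-signature of `α`. -/
def redSig (m n : ℕ) (i : ℤ) (α : Fin (m + n) → ℤ) : List Sign :=
  reduceSig (sigList m n i α)

/-- `ε_i(α)`: the number of `-` in the reduced `i`-signature. -/
def epsilonNum (m n : ℕ) (i : ℤ) (α : Fin (m + n) → ℤ) : ℕ :=
  (redSig m n i α).count Sign.minus

/-- `φ_i(α)`: the number of `+` in the reduced `i`-signature. -/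
def phiNum (m n : ℕ) (i : ℤ) (α : Fin (m + n) → ℤ) : ℕ :=
  (redSig m n i α).count Sign.plus

/-- `c_j ∈ ℤ^{m|n}`: `+1` at position `j` if `j` is left of the separator,
`-1` at position `j` otherwise, and `0` elsewhere (0-indexed). -/
def cvec (m n : ℕ) (j : ℕ) : Fin (m + n) → ℤ :=
  fun k => if (k : ℕ) = j then (if j < m then 1 else -1) else 0

/-- The index of the last occurrence of `s` in `l` (junk if `s ∉ l`). -/
def lastIdxOf (s : Sign) (l : List Sign) : ℕ :=
  l.length - 1 - l.reverse.idxOf s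

/-- The crystal operator `ẽ_i`: subtract `c_j` at the position `j` of the
leftmost `-` of the reduced `i`-signature; `none` if there is no `-`. -/
def etilde (m n : ℕ) (i : ℤ) (α : Fin (m + n) → ℤ) : Option (Fin (m + n) → ℤ) :=
  if Sign.minus ∈ redSig m n i α then
    some (fun k => α k - cvec m n ((redSig m n i α).idxOf Sign.minus) k)
  else none

/-- The crystal operator `f̃_i`: add `c_j` at the position `j` of the
rightmost `+` of the reduced `i`-signature; `none` if there is no `+`. -/
def ftilde (m n : ℕ) (i : ℤ) (α : Fin (m + n) → ℤ) : Option (Fin (m + n) → ℤ) :=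
  if Sign.plus ∈ redSig m n i α then
    some (fun k => α k + cvec m n (lastIdxOf Sign.plus (redSig m n i α)) k)
  else none

/-! ### Auxiliary rewriting development -/


def Redex (l : List Sign) (p q : ℕ) : Prop :=
  p < q ∧ l[p]? = some Sign.minus ∧ l[q]? = some Sign.plus ∧
    ∀ r, p < r → r < q → l[r]? = some Sign.zero

def Step (l l' : List Sign) : Prop :=
  ∃ p q, Redex l p q ∧ l' = (l.set p Sign.zero).set q Sign.zero

lemma step_length {l l' : List Sign} (h : Step l l') : l'.length = l.length := by
  obtain ⟨p, q, _, rfl⟩ := h; simp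

lemma steps_length {l l' : List Sign} (h : Relation.ReflTransGen Step l l') :
    l'.length = l.length := by
  induction h with
  | refl => rfl
  | tail _ hs ih => rw [step_length hs, ih]

lemma lt_len_of_getElem? {l : List Sign} {p : ℕ} {s : Sign} (h : l[p]? = some s) :
    p < l.length := by
  by_contra hc
  rw [List.getElem?_eq_none (by omega)] at h
  simp at h

lemma step_getElem?_rev {a b : List Sign} (h : Step a b) {j : ℕ} {s : Sign}
    (hs : s ≠ Sign.zero) (hb : b[j]? = some s) : a[j]? = some s := by
  obtain ⟨p, q, ⟨hpq, hp, hq, hz⟩, rfl⟩ := h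
  rw [List.getElem?_set, List.getElem?_set] at hb
  split_ifs at hb with h1 h2 h3 <;> first
    | exact absurd (Option.some.inj hb).symm hs
    | exact Option.noConfusion hb
    | exact hb

lemma steps_getElem?_rev {a b : List Sign} (h : Relation.ReflTransGen Step a b) {j : ℕ}
    {s : Sign} (hs : s ≠ Sign.zero) (hb : b[j]? = some s) : a[j]? = some s := by
  induction h with
  | refl => exact hb
  | tail _ hstep ih => exact ih (step_getElem?_rev hstep hs hb)

lemma step_set {a b : List Sign} (h : Step a b) {j : ℕ} {s : Sign}
    (hs : s ≠ Sign.zero) (haj : a[j]? = some s) (hbj : b[j]? = some s) (t : Sign) :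
    Step (a.set j t) (b.set j t) := by
  obtain ⟨p, q, ⟨hpq, hp, hq, hz⟩, rfl⟩ := h
  have hplen : p < a.length := lt_len_of_getElem? hp
  have hqlen : q < a.length := lt_len_of_getElem? hq
  have hjp : j ≠ p := by
    rintro rfl
    rw [List.getElem?_set, if_neg (by omega), List.getElem?_set, if_pos rfl,
      if_pos hplen] at hbj
    exact hs (Option.some.inj hbj).symm
  have hjq : j ≠ q := by
    rintro rfl
    rw [List.getElem?_set, if_pos rfl, if_pos (by simpa using hqlen)] at hbj
    exact hs (Option.some.inj hbj).symm
  refine ⟨p, q, ⟨hpq, ?_, ?_, ?_⟩, ?_⟩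
  · rw [List.getElem?_set, if_neg hjp]; exact hp
  · rw [List.getElem?_set, if_neg hjq]; exact hq
  · intro r h1 h2
    have hrj : j ≠ r := by
      rintro rfl
      rw [hz j h1 h2] at haj
      exact hs (Option.some.inj haj).symm
    rw [List.getElem?_set, if_neg hrj]; exact hz r h1 h2
  · rw [List.set_comm _ _ hjp, List.set_comm _ _ hjq]

lemma steps_set {a b : List Sign} (h : Relation.ReflTransGen Step a b) {j : ℕ} {s : Sign}
    (hs : s ≠ Sign.zero) (hbj : b[j]? = some s) (t : Sign) :
    a[j]? = some s ∧ Relation.ReflTransGen Step (a.set j t) (b.set j t) := by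
  induction h with
  | refl => exact ⟨hbj, Relation.ReflTransGen.refl⟩
  | tail hab hstep ih =>
    have hmid := step_getElem?_rev hstep hs hbj
    obtain ⟨h1, h2⟩ := ih hmid
    exact ⟨h1, h2.tail (step_set hstep hs hmid hbj t)⟩

lemma getElem?_cons_succ' {s : Sign} {t : List Sign} {r : ℕ} : (s :: t)[r + 1]? = t[r]? := by
  simp

lemma eatPlus_some : ∀ {l l' : List Sign}, eatPlus l = some l' →
    ∃ q : ℕ, l[q]? = some Sign.plus ∧ (∀ r : ℕ, r < q → l[r]? = some Sign.zero) ∧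
      l' = l.set q Sign.zero
  | [], _, h => by simp [eatPlus] at h
  | Sign.plus :: rest, l', h => by
    obtain rfl := Option.some.inj (show some (Sign.zero :: rest) = some l' from h)
    exact ⟨0, by simp, fun r hr => absurd hr (by omega), by simp⟩
  | Sign.zero :: rest, l', h => by
    have h' : (eatPlus rest).map (Sign.zero :: ·) = some l' := h
    rw [Option.map_eq_some_iff] at h'
    obtain ⟨r', hr', rfl⟩ := h'
    obtain ⟨q, h1, h2, rfl⟩ := eatPlus_some hr'
    refine ⟨q + 1, by rw [getElem?_cons_succ']; exact h1, ?_, by simp⟩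
    rintro (_ | r) hr
    · simp
    · rw [getElem?_cons_succ']; exact h2 r (by omega)
  | Sign.minus :: rest, _, h => by simp [eatPlus] at h

lemma eatPlus_none : ∀ {l : List Sign}, eatPlus l = none →
    ∀ q : ℕ, (∀ r : ℕ, r < q → l[r]? = some Sign.zero) → l[q]? ≠ some Sign.plus
  | [], _, q, _, hq => by simp at hq
  | Sign.plus :: rest, h, _, _, _ => by simp [eatPlus] at h
  | Sign.minus :: rest, _, q, hz, hq => by
    cases q with
    | zero => simp at hq
    | succ q => have := hz 0 (by omega); simp at this
  | Sign.zero :: rest, h, q, hz, hq => by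
    have h' : (eatPlus rest).map (Sign.zero :: ·) = none := h
    rw [Option.map_eq_none_iff] at h'
    cases q with
    | zero => simp at hq
    | succ q =>
      refine eatPlus_none h' q (fun r hr => ?_) (by rw [getElem?_cons_succ'] at hq; exact hq)
      have := hz (r + 1) (by omega)
      rwa [getElem?_cons_succ'] at this

lemma redex_cons {s : Sign} {t : List Sign} {p q : ℕ} (h : Redex t p q) :
    Redex (s :: t) (p + 1) (q + 1) := by
  obtain ⟨hpq, hp, hq, hz⟩ := h
  refine ⟨by omega, by simpa using hp, by simpa using hq, ?_⟩
  rintro (_ | r) h1 h2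
  · omega
  · rw [getElem?_cons_succ']; exact hz r (by omega) (by omega)

lemma redex_of_cons {s : Sign} {t : List Sign} {p q : ℕ} (h : Redex (s :: t) (p + 1) (q + 1)) :
    Redex t p q := by
  obtain ⟨hpq, hp, hq, hz⟩ := h
  refine ⟨by omega, by rwa [getElem?_cons_succ'] at hp, by rwa [getElem?_cons_succ'] at hq,
    fun r h1 h2 => ?_⟩
  have := hz (r + 1) (by omega) (by omega)
  rwa [getElem?_cons_succ'] at this

lemma step_cons (s : Sign) {t t' : List Sign} (h : Step t t') :
    Step (s :: t) (s :: t') := by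
  obtain ⟨p, q, hr, rfl⟩ := h
  exact ⟨p + 1, q + 1, redex_cons hr, by simp⟩

lemma cancelOne_some : ∀ {l l' : List Sign}, cancelOne l = some l' → Step l l'
  | [], _, h => by simp [cancelOne] at h
  | Sign.minus :: rest, l', h => by
    have h' : (match eatPlus rest with
      | some rest' => some (Sign.zero :: rest')
      | none => (cancelOne rest).map (Sign.minus :: ·)) = some l' := h
    rcases h1 : eatPlus rest with _ | rest'
    · rw [h1] at h'
      simp only [Option.map_eq_some_iff] at h'
      obtain ⟨r', hr', rfl⟩ := h'
      exact step_cons _ (cancelOne_some hr')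
    · rw [h1] at h'
      obtain rfl := Option.some.inj h'
      obtain ⟨q, hq, hz, rfl⟩ := eatPlus_some h1
      refine ⟨0, q + 1, ⟨by omega, by simp, by simpa using hq, ?_⟩, by simp⟩
      rintro (_ | r) h1' h2
      · omega
      · rw [getElem?_cons_succ']; exact hz r (by omega)
  | Sign.plus :: rest, l', h => by
    have h' : (cancelOne rest).map (Sign.plus :: ·) = some l' := h
    rw [Option.map_eq_some_iff] at h'
    obtain ⟨r', hr', rfl⟩ := h'
    exact step_cons _ (cancelOne_some hr')
  | Sign.zero :: rest, l', h => by
    have h' : (cancelOne rest).map (Sign.zero :: ·) = some l' := h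
    rw [Option.map_eq_some_iff] at h'
    obtain ⟨r', hr', rfl⟩ := h'
    exact step_cons _ (cancelOne_some hr')

lemma cancelOne_none_no_redex : ∀ {l : List Sign}, cancelOne l = none →
    ∀ p q, ¬ Redex l p q
  | [], _, p, q, ⟨_, hp, _, _⟩ => by simp at hp
  | Sign.minus :: rest, h, p, q, hr => by
    have h' : (match eatPlus rest with
      | some rest' => some (Sign.zero :: rest')
      | none => (cancelOne rest).map (Sign.minus :: ·)) = none := h
    rcases h1 : eatPlus rest with _ | rest'
    · rw [h1, Option.map_eq_none_iff] at h'
      obtain ⟨hpq, hp, hq, hz⟩ := hr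
      cases p with
      | zero =>
        cases q with
        | zero => omega
        | succ q =>
          refine eatPlus_none h1 q (fun r hr' => ?_) (by rwa [getElem?_cons_succ'] at hq)
          have := hz (r + 1) (by omega) (by omega)
          rwa [getElem?_cons_succ'] at this
      | succ p =>
        cases q with
        | zero => omega
        | succ q => exact cancelOne_none_no_redex h' p q (redex_of_cons ⟨hpq, hp, hq, hz⟩)
    · rw [h1] at h'; simp at h'
  | Sign.plus :: rest, h, p, q, hr => by
    have h' : (cancelOne rest).map (Sign.plus :: ·) = none := h
    rw [Option.map_eq_none_iff] at h'
    obtain ⟨hpq, hp, hq, hz⟩ := hr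
    cases p with
    | zero => simp at hp
    | succ p =>
      cases q with
      | zero => omega
      | succ q => exact cancelOne_none_no_redex h' p q (redex_of_cons ⟨hpq, hp, hq, hz⟩)
  | Sign.zero :: rest, h, p, q, hr => by
    have h' : (cancelOne rest).map (Sign.zero :: ·) = none := h
    rw [Option.map_eq_none_iff] at h'
    obtain ⟨hpq, hp, hq, hz⟩ := hr
    cases p with
    | zero => simp at hp
    | succ p =>
      cases q with
      | zero => omega
      | succ q => exact cancelOne_none_no_redex h' p q (redex_of_cons ⟨hpq, hp, hq, hz⟩)

/-! ### Termination of reduction -/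

def nminus : List Sign → ℕ
  | [] => 0
  | Sign.minus :: t => nminus t + 1
  | _ :: t => nminus t

lemma nminus_le_length : ∀ l : List Sign, nminus l ≤ l.length
  | [] => le_refl _
  | Sign.minus :: t => by simpa [nminus] using nminus_le_length t
  | Sign.plus :: t => by simp [nminus]; exact (nminus_le_length t).trans (by omega)
  | Sign.zero :: t => by simp [nminus]; exact (nminus_le_length t).trans (by omega)

lemma nminus_set : ∀ (l : List Sign) (p : ℕ) (s : Sign), l[p]? = some s →
    nminus (l.set p Sign.zero) + (if s = Sign.minus then 1 else 0) = nminus l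
  | [], p, s, h => by simp at h
  | a :: t, 0, s, h => by
    have ha : a = s := by simpa using h
    subst ha
    cases a <;> simp [nminus]
  | a :: t, p + 1, s, h => by
    rw [getElem?_cons_succ'] at h
    have := nminus_set t p s h
    cases a <;> simp [nminus] <;> omega

lemma step_nminus {l l' : List Sign} (h : Step l l') : nminus l' + 1 = nminus l := by
  obtain ⟨p, q, ⟨hpq, hp, hq, _⟩, rfl⟩ := h
  have hq' : (l.set p Sign.zero)[q]? = some Sign.plus := by
    rw [List.getElem?_set, if_neg (by omega)]; exact hq
  have h1 := nminus_set (l.set p Sign.zero) q Sign.plus hq'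
  have h2 := nminus_set l p Sign.minus hp
  simp at h1 h2
  omega

lemma reduceIter_spec : ∀ (k : ℕ) (l : List Sign), nminus l ≤ k →
    Relation.ReflTransGen Step l (reduceIter k l) ∧ cancelOne (reduceIter k l) = none
  | 0, l, h => by
    rcases h1 : cancelOne l with _ | l'
    · exact ⟨Relation.ReflTransGen.refl, h1⟩
    · have := step_nminus (cancelOne_some h1); omega
  | k + 1, l, h => by
    rcases h1 : cancelOne l with _ | l'
    · rw [reduceIter, h1]; exact ⟨Relation.ReflTransGen.refl, h1⟩
    · rw [reduceIter, h1]
      have hstep := cancelOne_some h1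
      have hle : nminus l' ≤ k := by have := step_nminus hstep; omega
      obtain ⟨h2, h3⟩ := reduceIter_spec k l' hle
      exact ⟨Relation.ReflTransGen.head hstep h2, h3⟩

lemma reduceSig_spec (l : List Sign) :
    Relation.ReflTransGen Step l (reduceSig l) ∧ cancelOne (reduceSig l) = none :=
  reduceIter_spec l.length l (nminus_le_length l)

/-! ### Confluence -/

lemma redex_det {a : List Sign} {p q1 q2 : ℕ} (h1 : Redex a p q1) (h2 : Redex a p q2) :
    q1 = q2 := by
  obtain ⟨hpq1, _, hq1, hz1⟩ := h1
  obtain ⟨hpq2, _, hq2, hz2⟩ := h2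
  rcases lt_trichotomy q1 q2 with h | h | h
  · rw [hz2 q1 hpq1 h] at hq1; simp at hq1
  · exact h
  · rw [hz1 q2 hpq2 h] at hq2; simp at hq2

lemma commute_aux {a : List Sign} {p1 q1 p2 q2 : ℕ} (h1 : Redex a p1 q1) (h2 : Redex a p2 q2)
    (hlt : q1 < p2) :
    Step ((a.set p1 Sign.zero).set q1 Sign.zero)
      ((((a.set p1 Sign.zero).set q1 Sign.zero).set p2 Sign.zero).set q2 Sign.zero) := by
  obtain ⟨hpq1, hp1, hq1, hz1⟩ := h1
  obtain ⟨hpq2, hp2, hq2, hz2⟩ := h2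
  refine ⟨p2, q2, ⟨hpq2, ?_, ?_, ?_⟩, rfl⟩
  · rw [List.getElem?_set, if_neg (by omega), List.getElem?_set, if_neg (by omega)]; exact hp2
  · rw [List.getElem?_set, if_neg (by omega), List.getElem?_set, if_neg (by omega)]; exact hq2
  · intro r hr1 hr2
    rw [List.getElem?_set, if_neg (by omega), List.getElem?_set, if_neg (by omega)]
    exact hz2 r hr1 hr2

lemma step_diamond : ∀ (a b c : List Sign), Step a b → Step a c →
    ∃ d, Relation.ReflGen Step b d ∧ Relation.ReflTransGen Step c d := by
  intro a b c hb hc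
  obtain ⟨p1, q1, hr1, rfl⟩ := hb
  obtain ⟨p2, q2, hr2, rfl⟩ := hc
  rcases lt_trichotomy p1 p2 with hpp | rfl | hpp
  · -- p1 < p2; first q1 < p2
    have hq1p2 : q1 < p2 := by
      rcases lt_trichotomy q1 p2 with h | h | h
      · exact h
      · exfalso
        have h2 := hr2.2.1
        rw [← h, hr1.2.2.1] at h2
        simp at h2
      · exfalso
        have h2 := hr2.2.1
        rw [hr1.2.2.2 p2 hpp h] at h2
        simp at h2
    refine ⟨(((a.set p1 Sign.zero).set q1 Sign.zero).set p2 Sign.zero).set q2 Sign.zero,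
      Relation.ReflGen.single (commute_aux hr1 hr2 hq1p2), Relation.ReflTransGen.single ?_⟩
    obtain ⟨hpq1, hp1, hq1, hz1⟩ := hr1
    obtain ⟨hpq2, hp2, hq2, hz2⟩ := hr2
    refine ⟨p1, q1, ⟨hpq1, ?_, ?_, ?_⟩, ?_⟩
    · rw [List.getElem?_set, if_neg (by omega), List.getElem?_set, if_neg (by omega)]; exact hp1
    · rw [List.getElem?_set, if_neg (by omega), List.getElem?_set, if_neg (by omega)]; exact hq1
    · intro r hr1' hr2'
      rw [List.getElem?_set, if_neg (by omega), List.getElem?_set, if_neg (by omega)]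
      exact hz1 r hr1' hr2'
    · rw [List.set_comm _ _ (show q2 ≠ p1 by omega), List.set_comm _ _ (show p2 ≠ p1 by omega),
        List.set_comm _ _ (show q2 ≠ q1 by omega), List.set_comm _ _ (show p2 ≠ q1 by omega)]
  · obtain rfl := redex_det hr1 hr2
    exact ⟨_, Relation.ReflGen.refl, Relation.ReflTransGen.refl⟩
  · -- p2 < p1 : symmetric
    have hq2p1 : q2 < p1 := by
      rcases lt_trichotomy q2 p1 with h | h | h
      · exact h
      · exfalso
        have h2 := hr1.2.1
        rw [← h, hr2.2.2.1] at h2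
        simp at h2
      · exfalso
        have h2 := hr1.2.1
        rw [hr2.2.2.2 p1 hpp h] at h2
        simp at h2
    refine ⟨(((a.set p2 Sign.zero).set q2 Sign.zero).set p1 Sign.zero).set q1 Sign.zero,
      ?_, Relation.ReflTransGen.single (commute_aux hr2 hr1 hq2p1)⟩
    refine Relation.ReflGen.single ?_
    obtain ⟨hpq1, hp1, hq1, hz1⟩ := hr1
    obtain ⟨hpq2, hp2, hq2, hz2⟩ := hr2
    refine ⟨p2, q2, ⟨hpq2, ?_, ?_, ?_⟩, ?_⟩
    · rw [List.getElem?_set, if_neg (by omega), List.getElem?_set, if_neg (by omega)]; exact hp2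
    · rw [List.getElem?_set, if_neg (by omega), List.getElem?_set, if_neg (by omega)]; exact hq2
    · intro r hr1' hr2'
      rw [List.getElem?_set, if_neg (by omega), List.getElem?_set, if_neg (by omega)]
      exact hz2 r hr1' hr2'
    · rw [List.set_comm _ _ (show q1 ≠ p2 by omega), List.set_comm _ _ (show p1 ≠ p2 by omega),
        List.set_comm _ _ (show q1 ≠ q2 by omega), List.set_comm _ _ (show p1 ≠ q2 by omega)]

def NF (l : List Sign) : Prop := ∀ l', ¬ Step l l'

lemma nf_reach {b d : List Sign} (h : Relation.ReflTransGen Step b d) (hb : NF b) : d = b := by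
  rcases h.cases_head with rfl | ⟨c, hc, _⟩
  · rfl
  · exact absurd hc (hb c)

lemma nf_unique {a b c : List Sign} (hab : Relation.ReflTransGen Step a b)
    (hac : Relation.ReflTransGen Step a c) (hb : NF b) (hc : NF c) : b = c := by
  obtain ⟨d, hbd, hcd⟩ := Relation.church_rosser step_diamond hab hac
  rw [← nf_reach hbd hb, ← nf_reach hcd hc]

/-! ### No minus before plus -/

def NoMP (l : List Sign) : Prop :=
  ∀ p q : ℕ, p < q → l[p]? = some Sign.minus → l[q]? ≠ some Sign.plus

lemma redex_of_mp : ∀ (d : ℕ) {l : List Sign} {p q : ℕ}, q - p ≤ d → p < q →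
    l[p]? = some Sign.minus → l[q]? = some Sign.plus → ∃ p' q', Redex l p' q'
  | 0, l, p, q, hd, hpq, _, _ => absurd hd (by omega)
  | d + 1, l, p, q, hd, hpq, hp, hq => by
    by_cases hz : ∀ r : ℕ, p < r → r < q → l[r]? = some Sign.zero
    · exact ⟨p, q, hpq, hp, hq, hz⟩
    · push_neg at hz
      obtain ⟨r, h1, h2, h3⟩ := hz
      have hrlen : r < l.length := (lt_len_of_getElem? hq).trans_le' (by omega)
      rw [List.getElem?_eq_getElem hrlen] at h3
      rcases hsr : l[r] with _ | _ | _
      · exact redex_of_mp d (p := p) (q := r) (by omega) h1 hp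
          (by rw [List.getElem?_eq_getElem hrlen, hsr])
      · exact redex_of_mp d (p := r) (q := q) (by omega) h2
          (by rw [List.getElem?_eq_getElem hrlen, hsr]) hq
      · exact absurd (by rw [hsr]) h3

lemma noMP_of_none {l : List Sign} (h : cancelOne l = none) : NoMP l := by
  intro p q hpq hp hq
  obtain ⟨p', q', hr⟩ := redex_of_mp (q - p) le_rfl hpq hp hq
  exact cancelOne_none_no_redex h p' q' hr

lemma nf_of_noMP {l : List Sign} (h : NoMP l) : NF l := by
  rintro l' ⟨p, q, ⟨hpq, hp, hq, _⟩, _⟩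
  exact h p q hpq hp hq

lemma noMP_set_plus {r : List Sign} (h : NoMP r) {j : ℕ} (hj : r[j]? = some Sign.minus)
    (hmin : ∀ p : ℕ, p < j → r[p]? ≠ some Sign.minus) : NoMP (r.set j Sign.plus) := by
  intro p q hpq hp hq
  have hjlen : j < r.length := lt_len_of_getElem? hj
  rw [List.getElem?_set] at hp hq
  split_ifs at hp with h1
  · simp at hp
  · split_ifs at hq with h2
    · -- q = j, so p < j, but then r[p]? = minus contradicts hmin
      exact hmin p (h2 ▸ hpq) hp
    · exact h p q hpq hp hq

lemma noMP_set_minus {r : List Sign} (h : NoMP r) {j : ℕ} (hj : r[j]? = some Sign.plus)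
    (hmax : ∀ q : ℕ, j < q → r[q]? ≠ some Sign.plus) : NoMP (r.set j Sign.minus) := by
  intro p q hpq hp hq
  have hjlen : j < r.length := lt_len_of_getElem? hj
  rw [List.getElem?_set] at hp hq
  split_ifs at hq with h2
  · simp at hq
  · split_ifs at hp with h1
    · -- p = j < q, r[q]? = plus contradicts hmax
      exact hmax q (h1 ▸ hpq) hq
    · exact h p q hpq hp hq

/-! ### Main list-level lemmas -/

theorem main_set {l : List Sign} {j : ℕ} {s t : Sign} (hs : s ≠ Sign.zero)
    (hj : (reduceSig l)[j]? = some s)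
    (hnomp' : NoMP ((reduceSig l).set j t)) :
    reduceSig (l.set j t) = (reduceSig l).set j t := by
  obtain ⟨hch, hnf⟩ := reduceSig_spec l
  obtain ⟨hlj, hch'⟩ := steps_set hch hs hj t
  obtain ⟨hch2, hnf2⟩ := reduceSig_spec (l.set j t)
  exact nf_unique hch2 hch' (nf_of_noMP (noMP_of_none hnf2)) (nf_of_noMP hnomp')

theorem main_minus {l : List Sign} {j : ℕ} (hj : (reduceSig l)[j]? = some Sign.minus)
    (hmin : ∀ p : ℕ, p < j → (reduceSig l)[p]? ≠ some Sign.minus) :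
    reduceSig (l.set j Sign.plus) = (reduceSig l).set j Sign.plus :=
  main_set (by simp) hj
    (noMP_set_plus (noMP_of_none (reduceSig_spec l).2) hj hmin)

theorem main_plus {l : List Sign} {j : ℕ} (hj : (reduceSig l)[j]? = some Sign.plus)
    (hmax : ∀ q : ℕ, j < q → (reduceSig l)[q]? ≠ some Sign.plus) :
    reduceSig (l.set j Sign.minus) = (reduceSig l).set j Sign.minus :=
  main_set (by simp) hj
    (noMP_set_minus (noMP_of_none (reduceSig_spec l).2) hj hmax)

/-! ### glue lemmas -/

lemma indexOf_min {a : Sign} : ∀ {l : List Sign} {p : ℕ}, l[p]? = some a → l.idxOf a ≤ p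
  | [], p, h => by simp at h
  | b :: t, p, h => by
    by_cases hba : b = a
    · subst hba; rw [List.idxOf_cons_self]; omega
    · cases p with
      | zero => exact absurd (by simpa using h) hba
      | succ p =>
        rw [List.idxOf_cons_ne _ hba]
        have := indexOf_min (l := t) (p := p) (by rwa [getElem?_cons_succ'] at h)
        omega

lemma reduceSig_length (l : List Sign) : (reduceSig l).length = l.length :=
  steps_length (reduceSig_spec l).1

lemma sigList_length (m n : ℕ) (i : ℤ) (α : Fin (m + n) → ℤ) :
    (sigList m n i α).length = m + n := by simp [sigList]

lemma sigList_getElem? (m n : ℕ) (i : ℤ) (α : Fin (m + n) → ℤ) {j : ℕ} (hj : j < m + n) :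
    (sigList m n i α)[j]? = some (signOf m n i α ⟨j, hj⟩) := by
  rw [sigList, List.getElem?_eq_getElem (by simpa using hj), List.getElem_ofFn]

lemma signOf_plus_left {m n : ℕ} {i : ℤ} {β : Fin (m + n) → ℤ} {j : Fin (m + n)}
    (hj : (j : ℕ) < m) (h : β j = i) : signOf m n i β j = Sign.plus := by
  simp [signOf, hj, h]

lemma signOf_plus_right {m n : ℕ} {i : ℤ} {β : Fin (m + n) → ℤ} {j : Fin (m + n)}
    (hj : ¬ (j : ℕ) < m) (h : β j = i + 1) : signOf m n i β j = Sign.plus := by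
  simp [signOf, hj, h]

lemma signOf_minus_left {m n : ℕ} {i : ℤ} {β : Fin (m + n) → ℤ} {j : Fin (m + n)}
    (hj : (j : ℕ) < m) (h : β j = i + 1) : signOf m n i β j = Sign.minus := by
  have hne : i + 1 ≠ i := by omega
  simp [signOf, hj, h, hne]

lemma signOf_minus_right {m n : ℕ} {i : ℤ} {β : Fin (m + n) → ℤ} {j : Fin (m + n)}
    (hj : ¬ (j : ℕ) < m) (h : β j = i) : signOf m n i β j = Sign.minus := by
  have hne : i ≠ i + 1 := by omega
  simp [signOf, hj, h, hne]

lemma signOf_minus_elim {m n : ℕ} {i : ℤ} {β : Fin (m + n) → ℤ} {j : Fin (m + n)}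
    (h : signOf m n i β j = Sign.minus) :
    ((j : ℕ) < m → β j = i + 1) ∧ (¬ (j : ℕ) < m → β j = i) := by
  unfold signOf at h
  split_ifs at h with e1 e2 e3 <;> simp_all

lemma signOf_plus_elim {m n : ℕ} {i : ℤ} {β : Fin (m + n) → ℤ} {j : Fin (m + n)}
    (h : signOf m n i β j = Sign.plus) :
    ((j : ℕ) < m → β j = i) ∧ (¬ (j : ℕ) < m → β j = i + 1) := by
  unfold signOf at h
  split_ifs at h with e1 e2 e3 <;> simp_all


/-- If `ẽ_i(α) ≠ ∅`, then the reduced `i`-signature of `ẽ_i(α)` is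
obtained from the reduced `i`-signature of `α` by replacing its leftmost `-` by a `+`;
dually, if `f̃_i(α) ≠ ∅`, then the reduced `i`-signature of `f̃_i(α)` is obtained from
that of `α` by replacing its rightmost `+` by a `-`. -/
theorem reduced_signature_of_crystal_operator
    (m n : ℕ) (hm : 1 ≤ m) (hn : 1 ≤ n) (i : ℤ) (α : Fin (m + n) → ℤ) :
    (∀ β : Fin (m + n) → ℤ, etilde m n i α = some β →
      redSig m n i β =
        (redSig m n i α).set ((redSig m n i α).idxOf Sign.minus) Sign.plus) ∧
    (∀ β : Fin (m + n) → ℤ, ftilde m n i α = some β →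
      redSig m n i β =
        (redSig m n i α).set (lastIdxOf Sign.plus (redSig m n i α)) Sign.minus) := by
  have hrlen : (redSig m n i α).length = m + n := by
    rw [redSig, reduceSig_length, sigList_length]
  constructor
  · intro β hβ
    rw [etilde] at hβ
    split_ifs at hβ with hmem
    obtain rfl := Option.some.inj hβ
    have hjlt : (redSig m n i α).idxOf Sign.minus < (redSig m n i α).length :=
      List.idxOf_lt_length_iff.mpr hmem
    set j := (redSig m n i α).idxOf Sign.minus with hjdef
    have hjmn : j < m + n := hrlen ▸ hjlt
    have hj : (redSig m n i α)[j]? = some Sign.minus := List.getElem?_idxOf hmem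
    have hmin : ∀ p : ℕ, p < j → (redSig m n i α)[p]? ≠ some Sign.minus :=
      fun p hp hcon => absurd (indexOf_min hcon) (by omega)
    have hslj : (sigList m n i α)[j]? = some Sign.minus :=
      steps_getElem?_rev (reduceSig_spec _).1 (by simp) hj
    have hsign : signOf m n i α ⟨j, hjmn⟩ = Sign.minus := by
      rw [sigList_getElem? m n i α hjmn] at hslj
      exact Option.some.inj hslj
    have hkey : sigList m n i (fun k => α k - cvec m n j k) =
        (sigList m n i α).set j Sign.plus := by
      apply List.ext_getElem
      · simp [sigList]
      intro k h1 h2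
      rw [sigList_length] at h1
      simp only [sigList, List.getElem_ofFn, List.getElem_set]
      by_cases hkj : j = k
      · subst hkj
        rw [if_pos rfl]
        by_cases hkm : j < m
        · refine signOf_plus_left (j := ⟨j, h1⟩) hkm ?_
          show α ⟨j, h1⟩ - cvec m n j ⟨j, h1⟩ = i
          have hc : cvec m n j ⟨j, h1⟩ = 1 := by simp [cvec, hkm]
          have hv : α ⟨j, h1⟩ = i + 1 := (signOf_minus_elim hsign).1 hkm
          rw [hc, hv]; ring
        · refine signOf_plus_right (j := ⟨j, h1⟩) hkm ?_
          show α ⟨j, h1⟩ - cvec m n j ⟨j, h1⟩ = i + 1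
          have hc : cvec m n j ⟨j, h1⟩ = -1 := by simp [cvec, hkm]
          have hv : α ⟨j, h1⟩ = i := (signOf_minus_elim hsign).2 hkm
          rw [hc, hv]; ring
      · rw [if_neg hkj]
        have hne : ¬ (((⟨k, h1⟩ : Fin (m + n)) : ℕ) = j) := fun h => hkj (by simpa using h.symm)
        have hv : α ⟨k, h1⟩ - cvec m n j ⟨k, h1⟩ = α ⟨k, h1⟩ := by
          simp [cvec, hne]
        simp only [signOf, hv]
    show reduceSig (sigList m n i (fun k => α k - cvec m n j k)) = _
    rw [hkey]
    exact main_minus hj hmin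
  · intro β hβ
    rw [ftilde] at hβ
    split_ifs at hβ with hmem
    obtain rfl := Option.some.inj hβ
    have hmemrev : Sign.plus ∈ (redSig m n i α).reverse := by simpa using hmem
    have htlt : (redSig m n i α).reverse.idxOf Sign.plus < (redSig m n i α).length := by
      have := List.idxOf_lt_length_iff.mpr hmemrev
      simpa using this
    set t := (redSig m n i α).reverse.idxOf Sign.plus with htdef
    set j := lastIdxOf Sign.plus (redSig m n i α) with hjdef
    have hjeq : j = (redSig m n i α).length - 1 - t := rfl
    have hjlt : j < (redSig m n i α).length := by omega
    have hjmn : j < m + n := hrlen ▸ hjlt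
    have hj : (redSig m n i α)[j]? = some Sign.plus := by
      have h1 : (redSig m n i α).reverse[t]? = some Sign.plus :=
        List.getElem?_idxOf hmemrev
      rw [List.getElem?_eq_getElem (by simpa using htlt), List.getElem_reverse] at h1
      rw [List.getElem?_eq_getElem (by omega)]
      exact h1
    have hmax : ∀ q : ℕ, j < q → (redSig m n i α)[q]? ≠ some Sign.plus := by
      intro q hq hcon
      have hqlt : q < (redSig m n i α).length := lt_len_of_getElem? hcon
      have h1 : (redSig m n i α).reverse[(redSig m n i α).length - 1 - q]? =
          some Sign.plus := by
        rw [List.getElem?_eq_getElem (by simp; omega), List.getElem_reverse]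
        rw [List.getElem?_eq_getElem hqlt] at hcon
        convert hcon using 3
        omega
      have := indexOf_min h1
      omega
    have hslj : (sigList m n i α)[j]? = some Sign.plus :=
      steps_getElem?_rev (reduceSig_spec _).1 (by simp) hj
    have hsign : signOf m n i α ⟨j, hjmn⟩ = Sign.plus := by
      rw [sigList_getElem? m n i α hjmn] at hslj
      exact Option.some.inj hslj
    have hkey : sigList m n i (fun k => α k + cvec m n j k) =
        (sigList m n i α).set j Sign.minus := by
      apply List.ext_getElem
      · simp [sigList]
      intro k h1 h2
      rw [sigList_length] at h1
      simp only [sigList, List.getElem_ofFn, List.getElem_set]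
      by_cases hkj : j = k
      · subst hkj
        rw [if_pos rfl]
        by_cases hkm : j < m
        · refine signOf_minus_left (j := ⟨j, h1⟩) hkm ?_
          show α ⟨j, h1⟩ + cvec m n j ⟨j, h1⟩ = i + 1
          have hc : cvec m n j ⟨j, h1⟩ = 1 := by simp [cvec, hkm]
          have hv : α ⟨j, h1⟩ = i := (signOf_plus_elim hsign).1 hkm
          rw [hc, hv]
        · refine signOf_minus_right (j := ⟨j, h1⟩) hkm ?_
          show α ⟨j, h1⟩ + cvec m n j ⟨j, h1⟩ = i
          have hc : cvec m n j ⟨j, h1⟩ = -1 := by simp [cvec, hkm]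
          have hv : α ⟨j, h1⟩ = i + 1 := (signOf_plus_elim hsign).2 hkm
          rw [hc, hv]; ring
      · rw [if_neg hkj]
        have hne : ¬ (((⟨k, h1⟩ : Fin (m + n)) : ℕ) = j) := fun h => hkj (by simpa using h.symm)
        have hv : α ⟨k, h1⟩ + cvec m n j ⟨k, h1⟩ = α ⟨k, h1⟩ := by
          simp [cvec, hne]
        simp only [signOf, hv]
    show reduceSig (sigList m n i (fun k => α k + cvec m n j k)) = _
    rw [hkey]
    exact main_plus hj hmax
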